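/- Let (Ω,𝓕,P) be a probability space, Xᵢ : Ω → Ωᵢ (i = 1,…,6) measurable maps into measurable spaces, and fix measurable sets A₅ ⊆ Ω₅, A₆ ⊆ Ω₆. Set ν := (P.restrict (X₆⁻¹(A₆))).map X₁. Suppose K is a finite kernel from Ω₁ to Ω₂ × Ω₃ × Ω₄ satisfying ∫_{A₁} K(ω₁)(S₂ × S₃ × S₄) dν = P(X₁⁻¹(A₁) ∩ X₂⁻¹(S₂) ∩ X₃⁻¹(S₃) ∩ X₄⁻¹(S₄) ∩ X₅⁻¹(A₅) ∩ X₆⁻¹(A₆)) for all measurable A₁, S₂, S₃, S₄. Fix measurable sets A₃ ⊆ Ω₃ and A₄ ⊆ Ω₄, and let h : Ω₁ → ℝ be a nonnegative 𝓕₁-measurable function with ∫_{A₁} h dν = P(X₁⁻¹(A₁) ∩ X₄⁻¹(A₄) ∩ X₆⁻¹(A₆)) for all measurable A₁ (a version of P[X₄∈A₄|X₁,X₆∈A₆]). Then the function L(ω₁, A₂) := K(ω₁)(A₂ × A₃ × A₄)/h(ω₁) when h(ω₁) ≠ 0, and 0 otherwise, satisfies ∫_{A₁} L(ω₁, A₂)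 d(((P.restrict (X₄⁻¹(A₄) ∩ X₆⁻¹(A₆))).map X₁)(ω₁)) = P(X₁⁻¹(A₁) ∩ X₂⁻¹(A₂) ∩ X₃⁻¹(A₃) ∩ X₄⁻¹(A₄) ∩ X₅⁻¹(A₅) ∩ X₆⁻¹(A₆)) for all measurable A₁ ⊆ Ω₁ and A₂ ⊆ Ω₂. (Paper's Theorem 3.4.) -/

import Mathlib

open MeasureTheory ProbabilityTheory

/-- Paper's Theorem 3.4: from a kernel version `K` of
`P[X₂, X₃, X₄; X₅ ∈ A₅ | X₁, X₆ ∈ A₆]` and a version `h` of `P[X₄ ∈ A₄ | X₁, X₆ ∈ A₆]`,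
the function `L(ω₁, A₂) = K(ω₁)(A₂ × A₃ × A₄)/h(ω₁)` (set to `0` where `h = 0`) is a
version of `P[X₂; X₃ ∈ A₃, X₅ ∈ A₅ | X₁; X₄ ∈ A₄, X₆ ∈ A₆]`. -/
theorem conditional_cooccurrence_kernel_div
    {Ω Ω₁ Ω₂ Ω₃ Ω₄ Ω₅ Ω₆ : Type*} [MeasurableSpace Ω] [MeasurableSpace Ω₁]
    [MeasurableSpace Ω₂] [MeasurableSpace Ω₃] [MeasurableSpace Ω₄] [MeasurableSpace Ω₅]
    [MeasurableSpace Ω₆]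
    (P : Measure Ω) [IsProbabilityMeasure P]
    {X₁ : Ω → Ω₁} {X₂ : Ω → Ω₂} {X₃ : Ω → Ω₃} {X₄ : Ω → Ω₄} {X₅ : Ω → Ω₅} {X₆ : Ω → Ω₆}
    (hX₁ : Measurable X₁) (hX₂ : Measurable X₂) (hX₃ : Measurable X₃)
    (hX₄ : Measurable X₄) (hX₅ : Measurable X₅) (hX₆ : Measurable X₆)
    {A₅ : Set Ω₅} {A₆ : Set Ω₆} (hA₅ : MeasurableSet A₅) (hA₆ : MeasurableSet A₆)
    (K : Kernel Ω₁ (Ω₂ × Ω₃ × Ω₄)) [IsFiniteKernel K]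
    (hK : ∀ (A₁ : Set Ω₁) (S₂ : Set Ω₂) (S₃ : Set Ω₃) (S₄ : Set Ω₄),
      MeasurableSet A₁ → MeasurableSet S₂ → MeasurableSet S₃ → MeasurableSet S₄ →
      ∫⁻ ω₁ in A₁, K ω₁ (S₂ ×ˢ (S₃ ×ˢ S₄)) ∂((P.restrict (X₆ ⁻¹' A₆)).map X₁) =
        P (X₁ ⁻¹' A₁ ∩ X₂ ⁻¹' S₂ ∩ X₃ ⁻¹' S₃ ∩ X₄ ⁻¹' S₄ ∩ X₅ ⁻¹' A₅ ∩ X₆ ⁻¹' A₆))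
    {A₃ : Set Ω₃} {A₄ : Set Ω₄} (hA₃ : MeasurableSet A₃) (hA₄ : MeasurableSet A₄)
    (h : Ω₁ → ℝ) (hh : Measurable h) (hh0 : ∀ x, 0 ≤ h x)
    (hhver : ∀ A₁ : Set Ω₁, MeasurableSet A₁ →
      ∫ x in A₁, h x ∂((P.restrict (X₆ ⁻¹' A₆)).map X₁) =
        (P (X₁ ⁻¹' A₁ ∩ X₄ ⁻¹' A₄ ∩ X₆ ⁻¹' A₆)).toReal) :
    ∀ (A₁ : Set Ω₁) (A₂ : Set Ω₂), MeasurableSet A₁ → MeasurableSet A₂ →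
      ∫⁻ ω₁ in A₁,
          (if h ω₁ = 0 then 0 else K ω₁ (A₂ ×ˢ (A₃ ×ˢ A₄)) / ENNReal.ofReal (h ω₁))
          ∂((P.restrict (X₄ ⁻¹' A₄ ∩ X₆ ⁻¹' A₆)).map X₁) =
        P (X₁ ⁻¹' A₁ ∩ X₂ ⁻¹' A₂ ∩ X₃ ⁻¹' A₃ ∩ X₄ ⁻¹' A₄ ∩ X₅ ⁻¹' A₅ ∩ X₆ ⁻¹' A₆) := by

  intro A₁ A₂ hA₁ hA₂
  set ν := (P.restrict (X₆ ⁻¹' A₆)).map X₁ with hνdef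
  set μ := (P.restrict (X₄ ⁻¹' A₄ ∩ X₆ ⁻¹' A₆)).map X₁ with hμdef
  set T := A₂ ×ˢ (A₃ ×ˢ A₄) with hTdef
  have hTm : MeasurableSet T := hA₂.prod (hA₃.prod hA₄)
  have hE46 : MeasurableSet (X₄ ⁻¹' A₄ ∩ X₆ ⁻¹' A₆) := (hX₄ hA₄).inter (hX₆ hA₆)
  have hμ_apply : ∀ S : Set Ω₁, MeasurableSet S →
      μ S = P (X₁ ⁻¹' S ∩ X₄ ⁻¹' A₄ ∩ X₆ ⁻¹' A₆) := by
    intro S hS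
    rw [hμdef, Measure.map_apply hX₁ hS, Measure.restrict_apply (hX₁ hS), Set.inter_assoc]
  -- the null set where h vanishes
  set N : Set Ω₁ := h ⁻¹' {0} with hNdef
  have hNm : MeasurableSet N := hh (measurableSet_singleton 0)
  have hNnull : P (X₁ ⁻¹' N ∩ X₄ ⁻¹' A₄ ∩ X₆ ⁻¹' A₆) = 0 := by
    have h0 : ∫ x in N, h x ∂ν = 0 := by
      apply setIntegral_eq_zero_of_forall_eq_zero
      intro x hx
      exact hx
    have := hhver N hNm
    rw [h0] at this
    exact ((ENNReal.toReal_eq_zero_iff _).mp this.symm).resolve_right (measure_ne_top _ _)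
  -- the target probability is unchanged if we intersect A₁ with Nᶜ
  have hPeq : P (X₁ ⁻¹' (Nᶜ ∩ A₁) ∩ X₂ ⁻¹' A₂ ∩ X₃ ⁻¹' A₃ ∩ X₄ ⁻¹' A₄ ∩ X₅ ⁻¹' A₅ ∩ X₆ ⁻¹' A₆)
      = P (X₁ ⁻¹' A₁ ∩ X₂ ⁻¹' A₂ ∩ X₃ ⁻¹' A₃ ∩ X₄ ⁻¹' A₄ ∩ X₅ ⁻¹' A₅ ∩ X₆ ⁻¹' A₆) := by
    apply le_antisymm
    · apply measure_mono
      intro ω hω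
      exact ⟨⟨⟨⟨⟨hω.1.1.1.1.1.2, hω.1.1.1.1.2⟩, hω.1.1.1.2⟩, hω.1.1.2⟩, hω.1.2⟩, hω.2⟩
    · calc P (X₁ ⁻¹' A₁ ∩ X₂ ⁻¹' A₂ ∩ X₃ ⁻¹' A₃ ∩ X₄ ⁻¹' A₄ ∩ X₅ ⁻¹' A₅ ∩ X₆ ⁻¹' A₆)
          ≤ P ((X₁ ⁻¹' (Nᶜ ∩ A₁) ∩ X₂ ⁻¹' A₂ ∩ X₃ ⁻¹' A₃ ∩ X₄ ⁻¹' A₄ ∩ X₅ ⁻¹' A₅ ∩ X₆ ⁻¹' A₆)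
              ∪ (X₁ ⁻¹' N ∩ X₄ ⁻¹' A₄ ∩ X₆ ⁻¹' A₆)) := by
            apply measure_mono
            intro ω hω
            by_cases hc : X₁ ω ∈ N
            · exact Or.inr ⟨⟨hc, hω.1.1.2⟩, hω.2⟩
            · exact Or.inl ⟨⟨⟨⟨⟨⟨hc, hω.1.1.1.1.1⟩, hω.1.1.1.1.2⟩, hω.1.1.1.2⟩,
                hω.1.1.2⟩, hω.1.2⟩, hω.2⟩
        _ ≤ P (X₁ ⁻¹' (Nᶜ ∩ A₁) ∩ X₂ ⁻¹' A₂ ∩ X₃ ⁻¹' A₃ ∩ X₄ ⁻¹' A₄ ∩ X₅ ⁻¹' A₅ ∩ X₆ ⁻¹' A₆)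
              + P (X₁ ⁻¹' N ∩ X₄ ⁻¹' A₄ ∩ X₆ ⁻¹' A₆) := measure_union_le _ _
        _ = _ := by rw [hNnull, add_zero]
  by_cases hint : Integrable h ν
  · -- main case: μ = ν.withDensity (ofReal ∘ h)
    have hμwd : μ = ν.withDensity (fun x => ENNReal.ofReal (h x)) := by
      ext S hS
      rw [withDensity_apply _ hS,
        ← ofReal_integral_eq_lintegral_ofReal (hint.restrict)
          (Filter.Eventually.of_forall hh0), hhver S hS, ← hμ_apply S hS,
        ENNReal.ofReal_toReal (measure_ne_top _ _)]
    have hg : Measurable fun ω₁ =>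
        if h ω₁ = 0 then (0 : ENNReal) else K ω₁ T / ENNReal.ofReal (h ω₁) :=
      Measurable.ite hNm measurable_const ((K.measurable_coe hTm).div hh.ennreal_ofReal)
    rw [hμwd, setLIntegral_withDensity_eq_setLIntegral_mul ν hh.ennreal_ofReal hg hA₁]
    have hfg : ∀ ω, ((fun x => ENNReal.ofReal (h x)) *
        fun ω₁ => if h ω₁ = 0 then (0 : ENNReal) else K ω₁ T / ENNReal.ofReal (h ω₁)) ω
        = (Nᶜ).indicator (fun ω₁ => K ω₁ T) ω := by
      intro ω
      by_cases hc : h ω = 0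
      · simp [hc, Set.indicator_apply, hNdef]
      · have hpos : 0 < h ω := lt_of_le_of_ne (hh0 ω) (Ne.symm hc)
        have hne0 : ENNReal.ofReal (h ω) ≠ 0 := by
          simp [ENNReal.ofReal_eq_zero, not_le, hpos]
        simp only [Pi.mul_apply, if_neg hc]
        rw [Set.indicator_of_mem (show ω ∈ Nᶜ from hc), mul_comm,
          ENNReal.div_mul_cancel hne0 ENNReal.ofReal_ne_top]
    rw [lintegral_congr hfg, lintegral_indicator hNm.compl _,
      Measure.restrict_restrict hNm.compl,
      hK (Nᶜ ∩ A₁) A₂ A₃ A₄ (hNm.compl.inter hA₁) hA₂ hA₃ hA₄, hPeq]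
  · -- degenerate case: h not integrable, so the conditioning event is null
    have h0 : ∫ x in Set.univ, h x ∂ν = 0 := by
      rw [Measure.restrict_univ]
      exact integral_undef hint
    have := hhver Set.univ MeasurableSet.univ
    rw [h0, Set.preimage_univ, Set.univ_inter] at this
    have hnull : P (X₄ ⁻¹' A₄ ∩ X₆ ⁻¹' A₆) = 0 :=
      ((ENNReal.toReal_eq_zero_iff _).mp this.symm).resolve_right (measure_ne_top _ _)
    have hμ0 : μ = 0 := by
      rw [hμdef, Measure.restrict_eq_zero.mpr hnull, Measure.map_zero]
    rw [hμ0]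
    have : P (X₁ ⁻¹' A₁ ∩ X₂ ⁻¹' A₂ ∩ X₃ ⁻¹' A₃ ∩ X₄ ⁻¹' A₄ ∩ X₅ ⁻¹' A₅ ∩ X₆ ⁻¹' A₆) = 0 := by
      refine le_antisymm (le_trans (measure_mono ?_) hnull.le) (zero_le')
      intro ω hω
      exact ⟨hω.1.1.2, hω.2⟩
    simp [this]
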